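/- For every even n ≥ 11, the sequence π = ((n−1)^2, 4^3, 3^{n−6}, 2) of n terms is graphic, has σ(π) = 5n − 6, and is not potentially K_{3,3}-graphic. -/

import Mathlib

/-- `π` is the degree sequence (as a multiset) of the simple graph `G`. -/
def IsDegSeqOf {V : Type} [Fintype V] (G : SimpleGraph V) (π : List ℕ) : Prop :=
  Multiset.map (fun v => (G.neighborSet v).ncard) Finset.univ.val = (π : Multiset ℕ)

/-- `π` is graphic: it is realized by some simple graph on `π.length` vertices. -/
def IsGraphic (π : List ℕ) : Prop :=
  ∃ G : SimpleGraph (Fin π.length), IsDegSeqOf G π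

/-- `π` is potentially `H`-graphic: some realization of `π` contains a copy of `H`
as a subgraph (an injective graph homomorphism from `H`). -/
def PotentiallyGraphic {W : Type} (H : SimpleGraph W) (π : List ℕ) : Prop :=
  ∃ G : SimpleGraph (Fin π.length), IsDegSeqOf G π ∧ ∃ f : H →g G, Function.Injective f

/-- The complete bipartite graph `K_{3,3}`. -/
def K33 : SimpleGraph (Fin 3 ⊕ Fin 3) := completeBipartiteGraph (Fin 3) (Fin 3)

/-- `K_6 − C_6`, the complement of the 6-cycle. -/
def K6mC6 : SimpleGraph (Fin 6) := (SimpleGraph.cycleGraph 6)ᶜ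

section Aux
open Finset

def adjP (n a b : ℕ) : Prop :=
  a ≠ b ∧ (a < 2 ∨ b < 2 ∨ (a < 5 ∧ b < 5) ∨
    (b = a + 1 ∧ a % 2 = 1 ∧ 5 ≤ a ∧ b ≤ n - 2) ∨
    (a = b + 1 ∧ b % 2 = 1 ∧ 5 ≤ b ∧ a ≤ n - 2))

instance (n a b : ℕ) : Decidable (adjP n a b) := by unfold adjP; infer_instance

def myG (n : ℕ) : SimpleGraph (Fin n) where
  Adj i j := adjP n i.val j.val
  symm := by
    constructor; rintro i j ⟨hne, h⟩
    refine ⟨fun h' => hne (h'.symm), by tauto⟩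
  loopless := by constructor; rintro i ⟨hne, _⟩; exact hne rfl

instance (n : ℕ) : DecidableRel (myG n).Adj := fun i j => by
  unfold myG; infer_instance

lemma card_filter_fin (n : ℕ) (p : ℕ → Prop) [DecidablePred p] :
    ((univ : Finset (Fin n)).filter (fun j => p j.val)).card = ((range n).filter p).card := by
  rw [← Finset.card_image_of_injective _ Fin.val_injective]
  congr 1
  ext j
  simp only [Finset.mem_image, Finset.mem_filter, Finset.mem_univ, true_and, Finset.mem_range]
  constructor
  · rintro ⟨a, hp, rfl⟩; exact ⟨a.isLt, hp⟩
  · rintro ⟨hn, hp⟩; exact ⟨⟨j, hn⟩, hp, rfl⟩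

lemma myG_deg (n : ℕ) (i : Fin n) :
    (myG n).degree i = ((range n).filter (fun j => adjP n i.val j)).card := by
  rw [SimpleGraph.degree, SimpleGraph.neighborFinset_eq_filter,
    ← card_filter_fin n (fun j => adjP n i.val j)]
  rfl

def expDeg (n i : ℕ) : ℕ :=
  if i < 2 then n - 1 else if i < 5 then 4 else if i ≤ n - 2 then 3 else 2

lemma filter_card_eq (n i : ℕ) (hn : 11 ≤ n) (hev : n % 2 = 0) (hi : i < n) :
    ((range n).filter (fun j => adjP n i j)).card = expDeg n i := by
  rcases lt_or_ge i 2 with h1 | h1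
  · have : (range n).filter (fun j => adjP n i j) = (range n).erase i := by
      ext j
      rw [mem_filter]; simp only [mem_filter, mem_range, mem_erase, adjP, ne_eq]
      omega
    rw [this, Finset.card_erase_of_mem (mem_range.2 hi), Finset.card_range, expDeg, if_pos h1]
  rcases lt_or_ge i 5 with h2 | h2
  · have : (range n).filter (fun j => adjP n i j) = (range 5).erase i := by
      ext j
      rw [mem_filter]; simp only [mem_filter, mem_range, mem_erase, adjP, ne_eq]
      omega
    rw [this, Finset.card_erase_of_mem (by simp; omega), Finset.card_range]
    simp only [expDeg]; split_ifs <;> omega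
  rcases le_or_gt i (n-2) with h3 | h3
  · by_cases hpar : i % 2 = 1
    · have : (range n).filter (fun j => adjP n i j) = {0, 1, i + 1} := by
        ext j
        rw [mem_filter]; simp only [mem_filter, mem_range, mem_insert, mem_singleton, adjP, ne_eq]
        omega
      rw [this]
      rw [show ({0, 1, i+1} : Finset ℕ).card = 3 by
        rw [Finset.card_insert_of_notMem (by simp only [mem_insert, mem_singleton]; omega),
            Finset.card_insert_of_notMem (by simp only [mem_singleton]; omega), Finset.card_singleton]]
      simp only [expDeg]; split_ifs <;> omega
    · have : (range n).filter (fun j => adjP n i j) = {0, 1, i - 1} := by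
        ext j
        rw [mem_filter]; simp only [mem_filter, mem_range, mem_insert, mem_singleton, adjP, ne_eq]
        omega
      rw [this]
      rw [show ({0, 1, i-1} : Finset ℕ).card = 3 by
        rw [Finset.card_insert_of_notMem (by simp only [mem_insert, mem_singleton]; omega),
            Finset.card_insert_of_notMem (by simp only [mem_singleton]; omega), Finset.card_singleton]]
      simp only [expDeg]; split_ifs <;> omega
  · have : (range n).filter (fun j => adjP n i j) = {0, 1} := by
      ext j
      rw [mem_filter]; simp only [mem_filter, mem_range, mem_insert, mem_singleton, adjP, ne_eq]
      omega
    rw [this]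
    rw [show ({0, 1} : Finset ℕ).card = 2 by decide]
    simp only [expDeg]; split_ifs <;> omega

lemma list_eq (n : ℕ) (hn : 11 ≤ n) :
    (List.range n).map (expDeg n) = List.replicate 2 (n - 1) ++ List.replicate 3 4 ++
      List.replicate (n - 6) 3 ++ [2] := by
  apply List.ext_getElem
  · simp; omega
  · intro k hk1 hk2
    simp only [List.getElem_map, List.getElem_range]
    have hk : k < n := by simpa using hk1
    rcases lt_or_ge k 2 with h | h
    · rw [List.getElem_append_left (by simp; omega), List.getElem_append_left (by simp; omega),
        List.getElem_append_left (by simpa using h), List.getElem_replicate]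
      simp [expDeg, h]
    rcases lt_or_ge k 5 with h2 | h2
    · rw [List.getElem_append_left (by simp; omega), List.getElem_append_left (by simp; omega),
        List.getElem_append_right (by simp; omega), List.getElem_replicate]
      simp only [expDeg]
      split_ifs <;> omega
    rcases lt_or_ge k (n-1) with h3 | h3
    · rw [List.getElem_append_left (by simp; omega),
        List.getElem_append_right (by simp; omega), List.getElem_replicate]
      simp only [expDeg]
      split_ifs <;> omega
    · rw [List.getElem_append_right (by simp; omega)]
      have : k = n - 1 := by omega
      simp only [expDeg]
      rw [List.getElem_singleton]
      split_ifs <;> omega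

lemma myG_degseq (n : ℕ) (hn : 11 ≤ n) (hev : n % 2 = 0) :
    Multiset.map (fun v => ((myG n).neighborSet v).ncard) Finset.univ.val =
      ((List.replicate 2 (n - 1) ++ List.replicate 3 4 ++
        List.replicate (n - 6) 3 ++ [2] : List ℕ) : Multiset ℕ) := by
  have hdeg : ∀ v : Fin n, ((myG n).neighborSet v).ncard = expDeg n v.val := by
    intro v
    rw [Set.ncard_eq_toFinset_card', ← SimpleGraph.neighborFinset_def,
      ← SimpleGraph.degree, myG_deg, filter_card_eq n v.val hn hev v.isLt]
  have huniv : (Finset.univ : Finset (Fin n)).val = ↑(List.finRange n) := rfl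
  rw [huniv, Multiset.map_coe]
  congr 1
  calc List.map (fun v => ((myG n).neighborSet v).ncard) (List.finRange n)
      = List.map (fun v : Fin n => expDeg n v.val) (List.finRange n) :=
        List.map_congr_left (fun v _ => hdeg v)
    _ = List.map (expDeg n) (List.range n) := by
        exact List.ext_getElem (by simp) (fun i h1 h2 => by simp)
    _ = _ := list_eq n hn

lemma countP_replicate' (p : ℕ → Bool) (k a : ℕ) :
    (List.replicate k a).countP p = if p a then k else 0 := by
  induction k with
  | zero => simp
  | succ k ih => simp [List.replicate_succ, List.countP_cons, ih]; split_ifs <;> simp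

lemma card_filter_deg (m : ℕ) (G : SimpleGraph (Fin m)) [DecidableRel G.Adj] (L : List ℕ)
    (hdeg : Multiset.map (fun v => (G.neighborSet v).ncard) Finset.univ.val = (L : Multiset ℕ))
    (p : ℕ → Prop) [DecidablePred p] :
    (univ.filter (fun v => p (G.degree v))).card = L.countP (fun d => decide (p d)) := by
  have h1 : ∀ v : Fin m, (G.neighborSet v).ncard = G.degree v := by
    intro v
    rw [Set.ncard_eq_toFinset_card', ← SimpleGraph.neighborFinset_def, ← SimpleGraph.degree]
  have hdeg' : Multiset.map (fun v => G.degree v) Finset.univ.val = (L : Multiset ℕ) := by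
    rw [← hdeg]; exact Multiset.map_congr rfl (fun v _ => (h1 v).symm)
  have : (univ.filter (fun v => p (G.degree v))).card
      = Multiset.countP p (Multiset.map (fun v => G.degree v) Finset.univ.val) := by
    rw [Multiset.countP_map, Finset.card_def, Finset.filter_val]
  rw [this, hdeg', Multiset.coe_countP]

lemma no_K33 (n m : ℕ) (hn : 11 ≤ n) (hev : n % 2 = 0) (hm : m = n)
    (G : SimpleGraph (Fin m))
    (hdeg : Multiset.map (fun v => (G.neighborSet v).ncard) Finset.univ.val =
      ((List.replicate 2 (n - 1) ++ List.replicate 3 4 ++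
        List.replicate (n - 6) 3 ++ [2] : List ℕ) : Multiset ℕ))
    (f : K33 →g G) : ¬ Function.Injective f := by
  intro hinj
  classical
  -- counting facts
  have hcount := fun (p : ℕ → Prop) (hp : DecidablePred p) =>
    card_filter_deg m G _ hdeg p
  have hF1 : (univ.filter (fun v => G.degree v = n - 1)).card = 2 := by
    rw [hcount (fun d => d = n - 1) inferInstance]
    simp [List.countP_append, countP_replicate', List.countP_cons]
    omega
  have hF2 : (univ.filter (fun v => 5 ≤ G.degree v)).card = 2 := by
    rw [hcount (fun d => 5 ≤ d) inferInstance]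
    simp [List.countP_append, countP_replicate', List.countP_cons]
    split_ifs <;> omega
  have hF3 : (univ.filter (fun v => 4 ≤ G.degree v)).card = 5 := by
    rw [hcount (fun d => 4 ≤ d) inferInstance]
    simp [List.countP_append, countP_replicate', List.countP_cons]
    split_ifs <;> omega
  -- extract the two dominating vertices
  obtain ⟨w1, hw1, w2, hw2, hne⟩ := Finset.one_lt_card.1 (by rw [hF1]; norm_num)
  rw [Finset.mem_filter] at hw1 hw2
  have hdw1 : G.degree w1 = n - 1 := hw1.2
  have hdw2 : G.degree w2 = n - 1 := hw2.2
  have hdom : ∀ w : Fin m, G.degree w = n - 1 → ∀ v, v ≠ w → G.Adj w v := by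
    intro w hw v hv
    have hsub : G.neighborFinset w ⊆ univ.erase w := by
      intro u hu
      rw [SimpleGraph.mem_neighborFinset] at hu
      exact Finset.mem_erase.2 ⟨hu.ne', Finset.mem_univ u⟩
    have hcard : (univ.erase w).card = n - 1 := by
      rw [Finset.card_erase_of_mem (Finset.mem_univ w), Finset.card_univ, Fintype.card_fin, hm]
    have heq : G.neighborFinset w = univ.erase w := by
      apply Finset.eq_of_subset_of_card_le hsub
      rw [hcard, SimpleGraph.card_neighborFinset_eq_degree, hw]
    have : v ∈ G.neighborFinset w := by
      rw [heq]; exact Finset.mem_erase.2 ⟨hv, Finset.mem_univ v⟩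
    rwa [SimpleGraph.mem_neighborFinset] at this
  have hdom1 := hdom w1 hdw1
  have hdom2 := hdom w2 hdw2
  -- all other vertices have degree ≤ 4
  have hdegle : ∀ v : Fin m, v ≠ w1 → v ≠ w2 → G.degree v ≤ 4 := by
    intro v h1 h2
    by_contra hlt
    push_neg at hlt
    have hpair : ({w1, w2} : Finset (Fin m)) ⊆ univ.filter (fun v => 5 ≤ G.degree v) := by
      intro u hu
      rw [Finset.mem_insert, Finset.mem_singleton] at hu
      rw [Finset.mem_filter]
      rcases hu with rfl | rfl <;> exact ⟨Finset.mem_univ _, by omega⟩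
    have hpaircard : ({w1, w2} : Finset (Fin m)).card = 2 := by
      rw [Finset.card_insert_of_notMem (by simpa using hne), Finset.card_singleton]
    have heq : univ.filter (fun v => 5 ≤ G.degree v) = {w1, w2} :=
      (Finset.eq_of_subset_of_card_le hpair (by rw [hF2, hpaircard])).symm
    have : v ∈ univ.filter (fun v => 5 ≤ G.degree v) :=
      Finset.mem_filter.2 ⟨Finset.mem_univ v, by omega⟩
    rw [heq, Finset.mem_insert, Finset.mem_singleton] at this
    tauto
  -- the two parts of the K33 copy
  set PA : Finset (Fin m) := Finset.image (fun x : Fin 3 => f (Sum.inl x)) univ with hPA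
  set PB : Finset (Fin m) := Finset.image (fun x : Fin 3 => f (Sum.inr x)) univ with hPB
  have hPAcard : PA.card = 3 := by
    rw [hPA, Finset.card_image_of_injective _ (fun a b h => Sum.inl_injective (hinj h)),
      Finset.card_univ, Fintype.card_fin]
  have hPBcard : PB.card = 3 := by
    rw [hPB, Finset.card_image_of_injective _ (fun a b h => Sum.inr_injective (hinj h)),
      Finset.card_univ, Fintype.card_fin]
  have hdisj : Disjoint PA PB := by
    rw [Finset.disjoint_left]
    rintro a ha hb
    rw [hPA, Finset.mem_image] at ha
    rw [hPB, Finset.mem_image] at hb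
    obtain ⟨x, -, rfl⟩ := ha
    obtain ⟨y, -, hxy⟩ := hb
    exact Sum.inr_ne_inl (hinj hxy)
  have hadj : ∀ (x y : Fin 3), G.Adj (f (Sum.inl x)) (f (Sum.inr y)) := by
    intro x y
    exact f.map_adj (by simp [K33])
  have hPBsub : ∀ v ∈ PA, PB ⊆ G.neighborFinset v := by
    intro v hv u hu
    rw [hPA, Finset.mem_image] at hv
    rw [hPB, Finset.mem_image] at hu
    obtain ⟨x, -, rfl⟩ := hv
    obtain ⟨y, -, rfl⟩ := hu
    rw [SimpleGraph.mem_neighborFinset]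
    exact hadj x y
  have hPAsub : ∀ v ∈ PB, PA ⊆ G.neighborFinset v := by
    intro v hv u hu
    rw [hPB, Finset.mem_image] at hv
    rw [hPA, Finset.mem_image] at hu
    obtain ⟨y, -, rfl⟩ := hv
    obtain ⟨x, -, rfl⟩ := hu
    rw [SimpleGraph.mem_neighborFinset]
    exact (hadj x y).symm
  -- generic lower bound: one extra dominating vertex
  have key1 : ∀ (v : Fin m) (S : Finset (Fin m)), S.card = 3 → S ⊆ G.neighborFinset v →
      ∀ w, w ∉ S → w ≠ v → (∀ u, u ≠ w → G.Adj w u) → 4 ≤ G.degree v := by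
    intro v S hScard hSsub w hwS hwv hwdom
    have hins : insert w S ⊆ G.neighborFinset v := by
      intro u hu
      rcases Finset.mem_insert.1 hu with rfl | hu
      · rw [SimpleGraph.mem_neighborFinset]
        exact (hwdom v (Ne.symm hwv)).symm
      · exact hSsub hu
    calc 4 = (insert w S).card := by rw [Finset.card_insert_of_notMem hwS, hScard]
      _ ≤ (G.neighborFinset v).card := Finset.card_le_card hins
      _ = G.degree v := rfl
  have key2 : ∀ (v : Fin m) (S : Finset (Fin m)), S.card = 3 → S ⊆ G.neighborFinset v →
      w1 ∉ S → w2 ∉ S → w1 ≠ v → w2 ≠ v → 5 ≤ G.degree v := by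
    intro v S hScard hSsub h1S h2S h1v h2v
    have hins : insert w1 (insert w2 S) ⊆ G.neighborFinset v := by
      intro u hu
      rcases Finset.mem_insert.1 hu with rfl | hu
      · rw [SimpleGraph.mem_neighborFinset]
        exact (hdom1 v (Ne.symm h1v)).symm
      rcases Finset.mem_insert.1 hu with rfl | hu
      · rw [SimpleGraph.mem_neighborFinset]
        exact (hdom2 v (Ne.symm h2v)).symm
      · exact hSsub hu
    calc 5 = (insert w1 (insert w2 S)).card := by
          rw [Finset.card_insert_of_notMem (by simp [hne, h1S]),
            Finset.card_insert_of_notMem h2S, hScard]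
      _ ≤ (G.neighborFinset v).card := Finset.card_le_card hins
      _ = G.degree v := rfl
  -- case analysis
  by_cases cA : w1 ∈ PA ∧ w2 ∈ PA
  · -- third vertex of PA has degree ≥ 5
    have hpsub : ({w1, w2} : Finset (Fin m)) ⊆ PA := by
      intro u hu
      rcases Finset.mem_insert.1 hu with rfl | hu
      · exact cA.1
      · rw [Finset.mem_singleton] at hu; subst hu; exact cA.2
    obtain ⟨u, hu⟩ : (PA \ ({w1, w2} : Finset (Fin m))).Nonempty := by
      rw [← Finset.card_pos, Finset.card_sdiff_of_subset hpsub, hPAcard,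
        Finset.card_insert_of_notMem (by simpa using hne), Finset.card_singleton]
      norm_num
    rw [Finset.mem_sdiff, Finset.mem_insert, Finset.mem_singleton] at hu
    push_neg at hu
    have h5 : 5 ≤ G.degree u := by
      apply key2 u PB hPBcard (hPBsub u hu.1)
      · exact Finset.disjoint_left.1 hdisj cA.1
      · exact Finset.disjoint_left.1 hdisj cA.2
      · exact fun h => hu.2.1 h.symm
      · exact fun h => hu.2.2 h.symm
    have := hdegle u hu.2.1 hu.2.2
    omega
  by_cases cB : w1 ∈ PB ∧ w2 ∈ PB
  · have hpsub : ({w1, w2} : Finset (Fin m)) ⊆ PB := by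
      intro u hu
      rcases Finset.mem_insert.1 hu with rfl | hu
      · exact cB.1
      · rw [Finset.mem_singleton] at hu; subst hu; exact cB.2
    obtain ⟨u, hu⟩ : (PB \ ({w1, w2} : Finset (Fin m))).Nonempty := by
      rw [← Finset.card_pos, Finset.card_sdiff_of_subset hpsub, hPBcard,
        Finset.card_insert_of_notMem (by simpa using hne), Finset.card_singleton]
      norm_num
    rw [Finset.mem_sdiff, Finset.mem_insert, Finset.mem_singleton] at hu
    push_neg at hu
    have h5 : 5 ≤ G.degree u := by
      apply key2 u PA hPAcard (hPAsub u hu.1)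
      · exact Finset.disjoint_right.1 hdisj cB.1
      · exact Finset.disjoint_right.1 hdisj cB.2
      · exact fun h => hu.2.1 h.symm
      · exact fun h => hu.2.2 h.symm
    have := hdegle u hu.2.1 hu.2.2
    omega
  -- mixed case: all six vertices of the copy have degree ≥ 4
  · have hA' : w1 ∉ PA ∨ w2 ∉ PA := by tauto
    have hB' : w1 ∉ PB ∨ w2 ∉ PB := by tauto
    have hsub : PA ∪ PB ⊆ univ.filter (fun v => 4 ≤ G.degree v) := by
      intro v hv
      rw [Finset.mem_filter]
      refine ⟨Finset.mem_univ v, ?_⟩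
      by_cases hv1 : v = w1
      · subst hv1; omega
      by_cases hv2 : v = w2
      · subst hv2; omega
      rcases Finset.mem_union.1 hv with hvA | hvB
      · rcases hB' with hw | hw
        · exact key1 v PB hPBcard (hPBsub v hvA) w1 hw (fun h => hv1 h.symm) hdom1
        · exact key1 v PB hPBcard (hPBsub v hvA) w2 hw (fun h => hv2 h.symm) hdom2
      · rcases hA' with hw | hw
        · exact key1 v PA hPAcard (hPAsub v hvB) w1 hw (fun h => hv1 h.symm) hdom1
        · exact key1 v PA hPAcard (hPAsub v hvB) w2 hw (fun h => hv2 h.symm) hdom2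
    have h6 : (PA ∪ PB).card = 6 := by
      rw [Finset.card_union_of_disjoint hdisj, hPAcard, hPBcard]
    have := Finset.card_le_card hsub
    rw [h6, hF3] at this
    omega

end Aux

/-- For even `n ≥ 11`, the sequence `((n−1)², 4³, 3^{n−6}, 2)` has `n` terms, is graphic,
has sum `5n − 6`, and is not potentially `K_{3,3}`-graphic. -/
theorem lower_bound_seq_K33_even (n : ℕ) (hn : 11 ≤ n) (heven : Even n)
    (π : List ℕ)
    (hπ : π = List.replicate 2 (n - 1) ++ List.replicate 3 4 ++
          List.replicate (n - 6) 3 ++ [2]) :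
    π.length = n ∧ IsGraphic π ∧ π.sum = 5 * n - 6 ∧ ¬ PotentiallyGraphic K33 π := by
  have hev : n % 2 = 0 := Nat.even_iff.mp heven
  have hlen : π.length = n := by
    subst hπ; simp; omega
  refine ⟨hlen, ?_, ?_, ?_⟩
  · rw [IsGraphic, hlen]
    refine ⟨myG n, ?_⟩
    rw [IsDegSeqOf, hπ]
    exact myG_degseq n hn hev
  · subst hπ
    simp [List.sum_append, List.sum_replicate, smul_eq_mul]
    omega
  · rintro ⟨G, hdeg, f, hinj⟩
    have hdeg2 : Multiset.map (fun v => (G.neighborSet v).ncard) Finset.univ.val =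
        ((List.replicate 2 (n - 1) ++ List.replicate 3 4 ++
          List.replicate (n - 6) 3 ++ [2] : List ℕ) : Multiset ℕ) := by
      rw [← hπ]; exact hdeg
    exact no_K33 n π.length hn hev hlen G hdeg2 f hinj
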